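/- A geodesic ray b in a proper CAT(0) space is κ-contracting if and only if it satisfies κ-slim condition 2, i.e. there exists c ≥ 0 such that for every x ∈ X and every y ∈ im(b) there is a point z on b between x_b and y with d(x_b, [x,y]) ≤ c·κ(‖z‖). -/

import Mathlib

open Set Metric Filter ENNReal

noncomputable section

/-- The set of points lying on a geodesic from `x` to `y`; in a uniquely geodesic space
(such as a CAT(0) space) this is the geodesic segment `[x,y]`. -/
def seg {X : Type*} [MetricSpace X] (x y : X) : Set X :=
  {z | dist x z + dist z y = dist x y}

/-- `X` is a geodesic metric space. -/
def GeodesicSpace (X : Type*) [MetricSpace X] : Prop :=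
  ∀ x y : X, ∃ γ : ℝ → X, γ 0 = x ∧ γ (dist x y) = y ∧
    ∀ s ∈ Icc (0:ℝ) (dist x y), ∀ t ∈ Icc (0:ℝ) (dist x y), dist (γ s) (γ t) = |s - t|

/-- `X` is a CAT(0) space: a geodesic metric space satisfying the CN (Bruhat–Tits)
inequality (comparison of triangles with Euclidean ones). -/
def IsCAT0 (X : Type*) [MetricSpace X] : Prop :=
  GeodesicSpace X ∧ ∀ x y z m : X, dist y m = dist y z / 2 → dist m z = dist y z / 2 →
    dist x m ^ 2 ≤ (dist x y ^ 2 + dist x z ^ 2) / 2 - dist y z ^ 2 / 4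

/-- `b` restricted to `[0,∞)` is a geodesic ray (an isometric embedding of `[0,∞)`). -/
def IsGeodesicRay {X : Type*} [MetricSpace X] (b : ℝ → X) : Prop :=
  ∀ s t : ℝ, 0 ≤ s → 0 ≤ t → dist (b s) (b t) = |s - t|

/-- The image of the geodesic ray `b`. -/
def rayIm {X : Type*} [MetricSpace X] (b : ℝ → X) : Set X := b '' Ici 0

/-- `κ` is a sublinear function: monotone increasing, concave, `≥ 1`, with `κ(t)/t → 0`. -/
structure IsSublinearFn (κ : ℝ → ℝ) : Prop where
  one_le : ∀ t : ℝ, 1 ≤ κ t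
  mono : Monotone κ
  concave : ConcaveOn ℝ (Ici 0) κ
  sublinear : Tendsto (fun t => κ t / t) atTop (nhds 0)

/-- `π` is the nearest-point projection onto the geodesic ray `b`:
`π x` lies on `b` and realizes the distance from `x` to `b`. -/
def IsProj {X : Type*} [MetricSpace X] (b : ℝ → X) (π : X → X) : Prop :=
  ∀ x : X, π x ∈ rayIm b ∧ dist x (π x) = infDist x (rayIm b)

/-- The geodesic ray `b` (with projection `π`) is `κ`-contracting: there is `c ≥ 0` such
that whenever `d(x,y) ≤ d(x,b)` we have `d(x_b, y_b) ≤ c·κ(‖x‖)`. -/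
def KappaContracting {X : Type*} [MetricSpace X] (κ : ℝ → ℝ) (o : X) (b : ℝ → X)
    (π : X → X) : Prop :=
  ∃ c ≥ (0:ℝ), ∀ x y : X, dist x y ≤ infDist x (rayIm b) →
    dist (π x) (π y) ≤ c * κ (dist o x)

/-- `b` is `κ`-contracting with contracting constant `c` (projection form, Lemma 2.6):
whenever `d(x,y) < d(x,b)` we have `d(x_b, y_b) ≤ c·κ(‖x_b‖)`. -/
def KappaContractingWith {X : Type*} [MetricSpace X] (κ : ℝ → ℝ) (o : X) (b : ℝ → X)
    (π : X → X) (c : ℝ) : Prop :=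
  0 ≤ c ∧ ∀ x y : X, dist x y < infDist x (rayIm b) →
    dist (π x) (π y) ≤ c * κ (dist o (π x))

/-- κ-slim condition 1: `d(x_b, [x,y]) ≤ c·κ(‖x_b‖)` for all `x ∈ X`, `y ∈ im(b)`. -/
def SlimCond1 {X : Type*} [MetricSpace X] (κ : ℝ → ℝ) (o : X) (b : ℝ → X) (π : X → X) : Prop :=
  ∃ c ≥ (0:ℝ), ∀ x : X, ∀ y ∈ rayIm b, infDist (π x) (seg x y) ≤ c * κ (dist o (π x))

/-- κ-slim condition 2: `d(x_b, [x,y]) ≤ c·κ(‖z‖)` for some `z` on `b` between `x_b` and `y`. -/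
def SlimCond2 {X : Type*} [MetricSpace X] (κ : ℝ → ℝ) (o : X) (b : ℝ → X) (π : X → X) : Prop :=
  ∃ c ≥ (0:ℝ), ∀ x : X, ∀ y ∈ rayIm b, ∃ z ∈ rayIm b ∩ seg (π x) y,
    infDist (π x) (seg x y) ≤ c * κ (dist o z)

/-- κ-slim condition 3: for `x y z` with `[y,z] ⊆ im(b)` and `w ∈ [y,z]`,
`d(w, [y,x] ∪ [x,z]) ≤ c·κ(‖x_b‖)`. -/
def SlimCond3 {X : Type*} [MetricSpace X] (κ : ℝ → ℝ) (o : X) (b : ℝ → X) (π : X → X) : Prop :=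
  ∃ c ≥ (0:ℝ), ∀ x y z : X, seg y z ⊆ rayIm b →
    ∀ w ∈ seg y z, infDist w (seg y x ∪ seg x z) ≤ c * κ (dist o (π x))

/-- κ-slim condition 4: for `x ∈ X` and `[y,z] ⊆ im(b)` with `‖y‖ ≤ ‖x_b‖ ≤ ‖z‖` and
`w ∈ [y,z]`, `d(w, [y,x] ∪ [x,z]) ≤ c·κ(‖z‖)`. -/
def SlimCond4 {X : Type*} [MetricSpace X] (κ : ℝ → ℝ) (o : X) (b : ℝ → X) (π : X → X) : Prop :=
  ∃ c ≥ (0:ℝ), ∀ x y z : X, seg y z ⊆ rayIm b →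
    dist o y ≤ dist o (π x) → dist o (π x) ≤ dist o z →
    ∀ w ∈ seg y z, infDist w (seg y x ∪ seg x z) ≤ c * κ (dist o z)


section Helpers

variable {X : Type*} [MetricSpace X]

/-! ### Generic real lemmas -/

lemma le_of_sq_le_sq' {a b : ℝ} (h : a ^ 2 ≤ b ^ 2) (hb : 0 ≤ b) : a ≤ b := by
  nlinarith [sq_nonneg (a - b), sq_nonneg (a + b)]

lemma between_le_max {u v w : ℝ} (h : |u - w| + |w - v| = |u - v|) : w ≤ max u v := by
  rcases le_total u v with huv | huv
  · have h1 : w - u ≤ |u - w| := by rw [abs_sub_comm]; exact le_abs_self _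
    have h2 : w - v ≤ |w - v| := le_abs_self _
    have h3 : |u - v| = v - u := by rw [abs_of_nonpos (by linarith : u - v ≤ 0)]; ring
    have : w ≤ v := by linarith
    exact this.trans (le_max_right u v)
  · have h1 : w - u ≤ |u - w| := by rw [abs_sub_comm]; exact le_abs_self _
    have h2 : w - v ≤ |w - v| := le_abs_self _
    have h3 : |u - v| = u - v := abs_of_nonneg (by linarith)
    have : w ≤ u := by linarith
    exact this.trans (le_max_left u v)

/-! ### seg basics -/

lemma left_mem_seg (x y : X) : x ∈ seg x y := by simp [seg]

lemma right_mem_seg (x y : X) : y ∈ seg x y := by simp [seg]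

lemma seg_comm {x y w : X} (h : w ∈ seg x y) : w ∈ seg y x := by
  simp only [seg, Set.mem_setOf_eq] at h ⊢
  rw [dist_comm y w, dist_comm w x, dist_comm y x]; linarith

lemma dist_left_le_of_mem_seg {x y w : X} (h : w ∈ seg x y) : dist x w ≤ dist x y := by
  simp only [seg, Set.mem_setOf_eq] at h
  have := dist_nonneg (x := w) (y := y); linarith

lemma seg_nonempty (x y : X) : (seg x y).Nonempty := ⟨x, left_mem_seg x y⟩

lemma isClosed_seg (x y : X) : IsClosed (seg x y) := by
  have : seg x y = {z | dist x z + dist z y = dist x y} := rfl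
  rw [this]
  exact isClosed_eq (by fun_prop) continuous_const

lemma isCompact_seg [ProperSpace X] (x y : X) : IsCompact (seg x y) := by
  refine (isCompact_closedBall x (dist x y)).of_isClosed_subset (isClosed_seg x y) ?_
  intro w hw
  simpa [mem_closedBall, dist_comm] using dist_left_le_of_mem_seg hw

lemma seg_trans {x y w w' : X} (h : w ∈ seg x y) (h' : w' ∈ seg w y) : w' ∈ seg x y := by
  simp only [seg, Set.mem_setOf_eq] at h h' ⊢
  have t1 : dist x w' ≤ dist x w + dist w w' := dist_triangle _ _ _
  have t2 : dist x y ≤ dist x w' + dist w' y := dist_triangle _ _ _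
  linarith

end Helpers


section Helpers2

variable {X : Type*} [MetricSpace X]

/-- Maximum principle for midpoint-convex continuous functions on an interval. -/
lemma midpoint_convex_max_principle {S : ℝ} {h : ℝ → ℝ}
    (hcont : ContinuousOn h (Icc 0 S)) (h0 : h 0 ≤ 0) (hS0 : h S ≤ 0)
    (hmid : ∀ u ∈ Icc (0:ℝ) S, ∀ v ∈ Icc (0:ℝ) S, h ((u + v) / 2) ≤ (h u + h v) / 2) :
    ∀ u ∈ Icc (0:ℝ) S, h u ≤ 0 := by
  by_contra hcon
  push_neg at hcon
  obtain ⟨u₀, hu₀, hu₀pos⟩ := hcon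
  have hS : (0:ℝ) ≤ S := hu₀.1.trans hu₀.2
  obtain ⟨a₀, ha₀, hmax⟩ := isCompact_Icc.exists_isMaxOn ⟨0, by simp [hS]⟩ hcont
  set M := h a₀ with hM
  have hMpos : 0 < M := lt_of_lt_of_le hu₀pos (hmax hu₀)
  set A := {a | a ∈ Icc (0:ℝ) S ∧ h a = M} with hA
  have hAclosed : IsClosed A := by
    have hAeq : A = Icc (0:ℝ) S ∩ h ⁻¹' {M} := by ext a; simp [hA]
    rw [hAeq]
    exact hcont.preimage_isClosed_of_isClosed isClosed_Icc isClosed_singleton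
  have hAne : A.Nonempty := ⟨a₀, ha₀, rfl⟩
  have hAbdd : BddBelow A := ⟨0, fun a ha => ha.1.1⟩
  set a' := sInf A with ha'
  have ha'A : a' ∈ A := hAclosed.csInf_mem hAne hAbdd
  have ha'Icc : a' ∈ Icc (0:ℝ) S := ha'A.1
  have ha'M : h a' = M := ha'A.2
  have ha'0 : a' ≠ 0 := by intro he; rw [he] at ha'M; linarith
  have ha'S : a' ≠ S := by intro he; rw [he] at ha'M; linarith
  have h0a : 0 < a' := lt_of_le_of_ne ha'Icc.1 (Ne.symm ha'0)
  have haS : a' < S := lt_of_le_of_ne ha'Icc.2 ha'S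
  set r := min a' (S - a') with hr
  have hra : r ≤ a' := min_le_left _ _
  have hrS : r ≤ S - a' := min_le_right _ _
  have hrpos : 0 < r := lt_min h0a (by linarith)
  have hu : a' - r ∈ Icc (0:ℝ) S := ⟨by linarith, by linarith⟩
  have hv : a' + r ∈ Icc (0:ℝ) S := ⟨by linarith, by linarith⟩
  have key := hmid (a' - r) hu (a' + r) hv
  have hmean : (a' - r + (a' + r)) / 2 = a' := by ring
  rw [hmean] at key
  have h1 : h (a' + r) ≤ M := hmax hv
  have h2 : h (a' - r) ≤ M := hmax hu
  have h3 : M ≤ h (a' - r) := by rw [ha'M] at key; linarith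
  have h4 : a' - r ∈ A := ⟨hu, le_antisymm h2 h3⟩
  have : a' ≤ a' - r := csInf_le hAbdd h4
  linarith

/-- From the CN inequality: distance to a point is midpoint-convex. -/
lemma CN_point_convex
    (hcn : ∀ x y z m : X, dist y m = dist y z / 2 → dist m z = dist y z / 2 →
      dist x m ^ 2 ≤ (dist x y ^ 2 + dist x z ^ 2) / 2 - dist y z ^ 2 / 4)
    {x y z m : X} (h1 : dist y m = dist y z / 2)
    (h2 : dist m z = dist y z / 2) : dist x m ≤ (dist x y + dist x z) / 2 := by
  have h := hcn x y z m h1 h2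
  have habs : |dist x y - dist x z| ≤ dist y z := by
    have := abs_dist_sub_le y z x
    rwa [dist_comm y x, dist_comm z x] at this
  have habs' := abs_le.mp habs
  refine le_of_sq_le_sq' ?_ (by positivity)
  nlinarith [habs'.1, habs'.2]

/-- Points of `seg x y` lie on any geodesic from `x` to `y`. -/
lemma mem_seg_eq_param
    (hcn : ∀ x y z m : X, dist y m = dist y z / 2 → dist m z = dist y z / 2 →
      dist x m ^ 2 ≤ (dist x y ^ 2 + dist x z ^ 2) / 2 - dist y z ^ 2 / 4)
    (hgeo : GeodesicSpace X) {x y w : X} (hw : w ∈ seg x y)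
    {γ : ℝ → X} (hγ0 : γ 0 = x) (hγL : γ (dist x y) = y)
    (hγ : ∀ s ∈ Icc (0:ℝ) (dist x y), ∀ t ∈ Icc (0:ℝ) (dist x y), dist (γ s) (γ t) = |s - t|) :
    w = γ (dist x w) := by
  set L := dist x y with hLdef
  set a := dist x w with hadef
  have haL : a ≤ L := dist_left_le_of_mem_seg hw
  have ha0 : 0 ≤ a := dist_nonneg
  have hL0 : 0 ≤ L := ha0.trans haL
  have haIcc : a ∈ Icc (0:ℝ) L := ⟨ha0, haL⟩
  have h0Icc : (0:ℝ) ∈ Icc (0:ℝ) L := ⟨le_rfl, hL0⟩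
  have hLIcc : L ∈ Icc (0:ℝ) L := ⟨hL0, le_rfl⟩
  set w' := γ a with hw'def
  have hxw' : dist x w' = a := by
    rw [← hγ0, hw'def, hγ 0 h0Icc a haIcc]
    simp [abs_of_nonneg ha0]
  have hw'y : dist w' y = L - a := by
    rw [← hγL, hw'def, hγ a haIcc L hLIcc]
    rw [abs_of_nonpos (by linarith)]; ring
  have hwy : dist w y = L - a := by
    have hseg := hw; simp only [seg, Set.mem_setOf_eq] at hseg
    rw [← hadef, ← hLdef] at hseg; linarith
  obtain ⟨σ, hσ0, hσd, hσ⟩ := hgeo w w'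
  set dww := dist w w' with hdww
  have hd0 : 0 ≤ dww := dist_nonneg
  have hmemd : dww ∈ Icc (0:ℝ) dww := ⟨hd0, le_rfl⟩
  have hmem0 : (0:ℝ) ∈ Icc (0:ℝ) dww := ⟨le_rfl, hd0⟩
  have hmemh : dww / 2 ∈ Icc (0:ℝ) dww := ⟨by linarith, by linarith⟩
  set m := σ (dww / 2) with hm
  have hm1 : dist w m = dww / 2 := by
    rw [← hσ0, hm, hσ 0 hmem0 (dww/2) hmemh]
    rw [abs_of_nonpos (by linarith)]; ring
  have hm2 : dist m w' = dww / 2 := by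
    rw [← hσd, hm, hσ (dww/2) hmemh dww hmemd]
    rw [abs_of_nonpos (by linarith)]; ring
  have hxm : dist x m ≤ a := by
    have := CN_point_convex hcn (x := x) hm1 hm2
    rw [← hadef, hxw'] at this; linarith
  have hym : dist y m ≤ L - a := by
    have := CN_point_convex hcn (x := y) hm1 hm2
    rw [dist_comm y w, hwy, dist_comm y w', hw'y] at this; linarith
  have htri : L ≤ dist x m + dist m y := by
    rw [hLdef]; exact dist_triangle x m y
  have hxma : a ≤ dist x m := by
    rw [dist_comm m y] at htri; linarith
  have hcnx := hcn x w w' m hm1 hm2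
  rw [← hadef, hxw'] at hcnx
  have hsq : a * a ≤ dist x m * dist x m := mul_self_le_mul_self ha0 hxma
  have hd20 : dww ≤ 0 := by nlinarith [hcnx, hsq, hd0]
  have hdeq : dww = 0 := le_antisymm hd20 hd0
  have hww' : w = w' := by
    have : dist w w' = 0 := by rw [← hdww]; exact hdeq
    exact eq_of_dist_eq_zero this
  rw [hww', hw'def, hadef]

/-- CAT(0) comparison (Stewart-type inequality) for a point on a geodesic segment. -/
lemma stewart
    (hcn : ∀ x y z m : X, dist y m = dist y z / 2 → dist m z = dist y z / 2 →
      dist x m ^ 2 ≤ (dist x y ^ 2 + dist x z ^ 2) / 2 - dist y z ^ 2 / 4)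
    (hgeo : GeodesicSpace X) (z : X) {x q w : X} (hw : w ∈ seg x q) :
    dist x q * dist z w ^ 2 ≤ (dist x q - dist x w) * dist z x ^ 2 + dist x w * dist z q ^ 2
      - dist x w * (dist x q - dist x w) * dist x q := by
  obtain ⟨γ, hγ0, hγL, hγ⟩ := hgeo x q
  set L := dist x q with hLdef
  have hL0 : (0:ℝ) ≤ L := dist_nonneg
  set T := dist z x with hT
  set G := dist z q with hG
  set f : ℝ → ℝ := fun u => L * dist z (γ u) ^ 2 -
    ((L - u) * T ^ 2 + u * G ^ 2 - u * (L - u) * L) with hf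
  have hdlip : ∀ u ∈ Icc (0:ℝ) L, ∀ v ∈ Icc (0:ℝ) L,
      dist (dist z (γ u)) (dist z (γ v)) ≤ (1:NNReal) * dist u v := by
    intro u hu v hv
    rw [Real.dist_eq, Real.dist_eq]
    push_cast
    rw [one_mul]
    calc |dist z (γ u) - dist z (γ v)| ≤ dist (γ u) (γ v) := by
          have := abs_dist_sub_le (γ u) (γ v) z
          rwa [dist_comm (γ u) z, dist_comm (γ v) z] at this
      _ = |u - v| := hγ u hu v hv
  have hdcont : ContinuousOn (fun u => dist z (γ u)) (Icc 0 L) :=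
    (LipschitzOnWith.of_dist_le_mul hdlip).continuousOn
  have hcont : ContinuousOn f (Icc 0 L) := by
    apply ContinuousOn.sub
    · exact continuousOn_const.mul (hdcont.pow 2)
    · fun_prop
  have hf0 : f 0 ≤ 0 := by
    have heq : L * dist z (γ 0) ^ 2 -
        ((L - 0) * T ^ 2 + 0 * G ^ 2 - 0 * (L - 0) * L) = 0 := by
      rw [hγ0, ← hT]; ring
    simp only [hf]; linarith [heq]
  have hfL : f L ≤ 0 := by
    have heq : L * dist z (γ L) ^ 2 -
        ((L - L) * T ^ 2 + L * G ^ 2 - L * (L - L) * L) = 0 := by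
      rw [hγL, ← hG]; ring
    simp only [hf]; linarith [heq]
  have hmid : ∀ u ∈ Icc (0:ℝ) L, ∀ v ∈ Icc (0:ℝ) L, f ((u + v) / 2) ≤ (f u + f v) / 2 := by
    intro u hu v hv
    have hmidmem : (u + v) / 2 ∈ Icc (0:ℝ) L :=
      ⟨by linarith [hu.1, hv.1], by linarith [hu.2, hv.2]⟩
    have hduv : dist (γ u) (γ v) = |u - v| := hγ u hu v hv
    have habs2 : |(u - v) / 2| = |u - v| / 2 := by
      rw [abs_div]; norm_num
    have hm1 : dist (γ u) (γ ((u + v) / 2)) = dist (γ u) (γ v) / 2 := by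
      rw [hγ u hu ((u+v)/2) hmidmem, hduv, show u - (u + v) / 2 = (u - v) / 2 by ring, habs2]
    have hm2 : dist (γ ((u + v) / 2)) (γ v) = dist (γ u) (γ v) / 2 := by
      rw [hγ ((u+v)/2) hmidmem v hv, hduv, show (u + v) / 2 - v = (u - v) / 2 by ring, habs2]
    have hcnz := hcn z (γ u) (γ v) (γ ((u + v) / 2)) hm1 hm2
    rw [hduv, sq_abs] at hcnz
    have h' := mul_le_mul_of_nonneg_left hcnz hL0
    simp only [hf]
    nlinarith [h']
  have hmain := midpoint_convex_max_principle hcont hf0 hfL hmid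
  have hwparam := mem_seg_eq_param hcn hgeo hw hγ0 hγL hγ
  have haIcc : dist x w ∈ Icc (0:ℝ) L := ⟨dist_nonneg, dist_left_le_of_mem_seg hw⟩
  have hfa := hmain (dist x w) haIcc
  simp only [hf] at hfa
  rw [← hwparam] at hfa
  linarith

end Helpers2


section Helpers3

variable {X : Type*} [MetricSpace X] {b : ℝ → X} {o : X} {π : X → X}

lemma ray_param_dist (hb : IsGeodesicRay b) (hb0 : b 0 = o) {u : ℝ} (hu : 0 ≤ u) :
    dist o (b u) = u := by
  rw [← hb0, hb 0 u le_rfl hu, abs_of_nonpos (by linarith)]; ring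

lemma o_mem_ray (hb0 : b 0 = o) : o ∈ rayIm b := ⟨0, mem_Ici.mpr le_rfl, hb0⟩

lemma dist_o_between (hb : IsGeodesicRay b) (hb0 : b 0 = o) {p q z : X}
    (hp : p ∈ rayIm b) (hq : q ∈ rayIm b) (hz : z ∈ rayIm b ∩ seg p q) :
    dist o z ≤ max (dist o p) (dist o q) := by
  obtain ⟨u, hu, rfl⟩ := hp
  obtain ⟨v, hv, rfl⟩ := hq
  obtain ⟨⟨w, hw, rfl⟩, hzseg⟩ := hz
  replace hu : (0:ℝ) ≤ u := hu
  replace hv : (0:ℝ) ≤ v := hv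
  replace hw : (0:ℝ) ≤ w := hw
  simp only [seg, Set.mem_setOf_eq] at hzseg
  rw [hb u w hu hw, hb w v hw hv, hb u v hu hv] at hzseg
  rw [ray_param_dist hb hb0 hu, ray_param_dist hb hb0 hv, ray_param_dist hb hb0 hw]
  exact between_le_max hzseg

lemma infDist_le_norm (hb0 : b 0 = o) (x : X) : infDist x (rayIm b) ≤ dist o x := by
  rw [dist_comm]; exact infDist_le_dist_of_mem (o_mem_ray hb0)

lemma proj_dist_le_norm (hb0 : b 0 = o) (hπ : IsProj b π) (x : X) :
    dist x (π x) ≤ dist o x := by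
  rw [(hπ x).2]; exact infDist_le_norm hb0 x

lemma norm_proj_le (hb0 : b 0 = o) (hπ : IsProj b π) (x : X) :
    dist o (π x) ≤ 2 * dist o x := by
  have h1 := dist_triangle o x (π x)
  have h2 := proj_dist_le_norm hb0 hπ x
  linarith

lemma infDist_lipschitz (x y : X) (s : Set X) :
    infDist x s ≤ infDist y s + dist x y := infDist_le_infDist_add_dist

lemma exists_seg_point (hgeo : GeodesicSpace X) (x y : X) {τ : ℝ} (h0 : 0 ≤ τ)
    (hτ : τ ≤ dist x y) : ∃ w ∈ seg x y, dist x w = τ ∧ dist w y = dist x y - τ := by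
  obtain ⟨γ, hγ0, hγL, hγ⟩ := hgeo x y
  have hL0 : (0:ℝ) ≤ dist x y := dist_nonneg
  have h1 : dist x (γ τ) = τ := by
    rw [← hγ0, hγ 0 ⟨le_rfl, hL0⟩ τ ⟨h0, hτ⟩, abs_of_nonpos (by linarith)]; ring
  have h2 : dist (γ τ) y = dist x y - τ := by
    have h2' : dist (γ τ) (γ (dist x y)) = dist x y - τ := by
      rw [hγ τ ⟨h0, hτ⟩ (dist x y) ⟨hL0, le_rfl⟩, abs_of_nonpos (by linarith)]; ring
    rwa [hγL] at h2' 
  refine ⟨γ τ, ?_, h1, h2⟩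
  simp only [seg, Set.mem_setOf_eq]
  rw [h1, h2]; ring

lemma kappa_nonneg {κ : ℝ → ℝ} (hκ : IsSublinearFn κ) (t : ℝ) : 0 ≤ κ t :=
  le_trans zero_le_one (hκ.one_le t)

lemma kappa_scale {κ : ℝ → ℝ} (hκ : IsSublinearFn κ) {u lam : ℝ} (hu : 0 ≤ u)
    (hlam : 1 ≤ lam) : κ (lam * u) ≤ lam * κ u := by
  have hlam0 : 0 < lam := by linarith
  have hmem1 : lam * u ∈ Ici (0:ℝ) := mem_Ici.mpr (by positivity)
  have hmem2 : (0:ℝ) ∈ Ici (0:ℝ) := mem_Ici.mpr le_rfl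
  have ha : (0:ℝ) ≤ 1/lam := by positivity
  have hb' : (0:ℝ) ≤ 1 - 1/lam := by
    rw [sub_nonneg]; exact (div_le_one hlam0).mpr hlam
  have hab : 1/lam + (1 - 1/lam) = 1 := by ring
  have hconc := hκ.concave.2 hmem1 hmem2 ha hb' hab
  have h1 : (1/lam) • (lam * u) + (1 - 1/lam) • (0:ℝ) = u := by
    simp only [smul_eq_mul, mul_zero, add_zero]
    field_simp
  rw [h1] at hconc
  simp only [smul_eq_mul] at hconc
  have hκ0 : 0 ≤ κ 0 := kappa_nonneg hκ 0
  have hκl : 0 ≤ κ (lam * u) := kappa_nonneg hκ _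
  have h2 : (1/lam) * κ (lam*u) ≤ κ u := by nlinarith [mul_nonneg hb' hκ0]
  calc κ (lam * u) = lam * (1/lam * κ (lam * u)) := by field_simp
    _ ≤ lam * κ u := mul_le_mul_of_nonneg_left h2 hlam0.le

end Helpers3


section LemI

variable {X : Type*} [MetricSpace X] [ProperSpace X] {b : ℝ → X} {o : X} {π : X → X}
  {κ : ℝ → ℝ} {c : ℝ}

set_option maxHeartbeats 1000000 in
/-- Key lemma: if slim condition 2 holds and `β` is well inside the ball around `α`
not touching the ray, then the projections of `α` and `β` are close. -/
lemma proj_close_of_slim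
    (hcn : ∀ x y z m : X, dist y m = dist y z / 2 → dist m z = dist y z / 2 →
      dist x m ^ 2 ≤ (dist x y ^ 2 + dist x z ^ 2) / 2 - dist y z ^ 2 / 4)
    (hgeo : GeodesicSpace X) (hκ : IsSublinearFn κ)
    (hb : IsGeodesicRay b) (hb0 : b 0 = o) (hπ : IsProj b π) (hc : 0 ≤ c)
    (hslim : ∀ x : X, ∀ y ∈ rayIm b, ∃ z ∈ rayIm b ∩ seg (π x) y,
      infDist (π x) (seg x y) ≤ c * κ (dist o z))
    (α β : X) (E : ℝ)
    (hE : c * κ (max (dist o (π α)) (dist o (π β))) ≤ E)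
    (hfar : dist α β + 2 * E ≤ infDist α (rayIm b)) :
    dist (π α) (π β) ≤ 3 * E := by
  set p := π α with hp
  set q := π β with hq
  have hqray : q ∈ rayIm b := (hπ β).1
  have hpray : p ∈ rayIm b := (hπ α).1
  set D := dist p q with hD
  set t := dist α β with ht
  have hdp : dist α p = infDist α (rayIm b) := (hπ α).2
  set d := dist α p with hd
  have hfar' : t + 2*E ≤ d := by rw [hdp]; exact hfar
  set G := dist β q with hG
  have hE0 : 0 ≤ E := le_trans (mul_nonneg hc (kappa_nonneg hκ _)) hE
  -- slim applied to (α, q)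
  obtain ⟨z1, hz1, hb1⟩ := hslim α q hqray
  have hz1n : dist o z1 ≤ max (dist o p) (dist o q) := dist_o_between hb hb0 hpray hqray hz1
  have hb1' : infDist p (seg α q) ≤ E := by
    refine le_trans (le_trans hb1 ?_) hE
    exact mul_le_mul_of_nonneg_left (hκ.mono hz1n) hc
  obtain ⟨w, hwseg, hwdist⟩ := (isCompact_seg α q).exists_infDist_eq_dist (seg_nonempty α q) p
  have hpw : dist p w ≤ E := by rw [← hwdist]; exact hb1'
  -- slim applied to (β, p)
  obtain ⟨z2, hz2, hb2⟩ := hslim β p hpray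
  have hz2n : dist o z2 ≤ max (dist o q) (dist o p) := dist_o_between hb hb0 hqray hpray hz2
  rw [max_comm] at hz2n
  have hb2' : infDist q (seg β p) ≤ E := by
    refine le_trans (le_trans hb2 ?_) hE
    exact mul_le_mul_of_nonneg_left (hκ.mono hz2n) hc
  obtain ⟨w', hw'seg, hw'dist⟩ :=
    (isCompact_seg β p).exists_infDist_eq_dist (seg_nonempty β p) q
  have hqw' : dist q w' ≤ E := by rw [← hw'dist]; exact hb2'
  -- chain inequality via w'
  have hw'seg' : dist β w' + dist w' p = dist β p := hw'seg
  have hchain : G + D - 2*E ≤ dist β p := by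
    have h2 : dist β q ≤ dist β w' + dist w' q := dist_triangle _ _ _
    have h3 : dist p q ≤ dist p w' + dist w' q := dist_triangle _ _ _
    have h4 : dist w' q = dist q w' := dist_comm _ _
    have h5 : dist p w' = dist w' p := dist_comm _ _
    rw [← hG] at h2
    rw [← hD] at h3
    linarith
  -- geometry of w on seg α q
  have hwseg' : dist α w + dist w q = dist α q := hwseg
  set S := dist α q with hS
  set a := dist α w with ha
  have haup : a ≤ d + E := by
    have := dist_triangle α p w
    have h5 : dist p w = dist w p := dist_comm _ _
    rw [← ha, ← hd] at this
    linarith [this, hpw]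
  have halow : d - E ≤ a := by
    have := dist_triangle α w p
    have h5 : dist w p = dist p w := dist_comm _ _
    rw [← ha, ← hd] at this
    linarith [this, hpw]
  have ha'low : D - E ≤ dist w q := by
    have := dist_triangle p w q
    rw [← hD] at this
    linarith [this, hpw]
  have hSle : S ≤ t + G := by
    have := dist_triangle α β q
    rw [← hS, ← ht, ← hG] at this
    exact this
  have hSd : d ≤ S := by
    rw [hdp, hS]; exact infDist_le_dist_of_mem hqray
  have hDda : D ≤ d + S := by
    have := dist_triangle p α q
    have h5 : dist p α = dist α p := dist_comm _ _
    rw [← hD, ← hS] at this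
    rw [h5, ← hd] at this
    exact this
  -- Stewart comparison with apex β
  have hstew := stewart hcn hgeo β hwseg
  rw [dist_comm β α] at hstew
  rw [← hS, ← ha, ← ht, ← hG] at hstew
  -- lower bound for dist β w
  have hlow : G + D - 3*E ≤ dist β w := by
    have h6 : dist β p ≤ dist β w + dist w p := dist_triangle _ _ _
    have h5 : dist w p = dist p w := dist_comm _ _
    linarith [hchain, hpw]
  by_cases hD3 : D ≤ 3*E
  · exact hD3
  exfalso
  push_neg at hD3
  have hδ : 0 < D - 3*E := by linarith
  have hG0 : 0 ≤ G := dist_nonneg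
  have ht0 : 0 ≤ t := dist_nonneg
  have ha0 : 0 ≤ a := dist_nonneg
  have hS0 : 0 ≤ S := dist_nonneg
  have hwq : dist w q = S - a := by linarith [hwseg']
  have hSa0 : 0 ≤ S - a := by rw [← hwq]; exact dist_nonneg
  have hGD0 : 0 ≤ G + D - 3*E := by linarith
  have hta : t ≤ a := by linarith
  have hstep1 : (S - a) * t^2 ≤ (S - a) * a^2 :=
    mul_le_mul_of_nonneg_left (pow_le_pow_left₀ ht0 hta 2) hSa0
  have hstep2 : S * (G + D - 3*E)^2 ≤ S * dist β w ^2 :=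
    mul_le_mul_of_nonneg_left (pow_le_pow_left₀ hGD0 hlow 2) hS0
  have hring : (S-a)*a^2 - a*(S-a)*S = -(a*(S-a)^2) := by ring
  have hcomb : S * (G + D - 3*E)^2 ≤ a * G^2 - a * (S-a)^2 := by
    linarith [hstew, hstep1, hstep2, hring]
  have haS : a ≤ S := by linarith
  have hfin : S * (G + D - 3*E)^2 ≤ S * G^2 := by
    linarith [hcomb, mul_nonneg ha0 (sq_nonneg (S - a)),
      mul_le_mul_of_nonneg_right haS (sq_nonneg G)]
  have hpos : 0 < 2*G*(D-3*E) + (D-3*E)^2 := by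
    have h1 : 0 ≤ 2*G*(D-3*E) := mul_nonneg (mul_nonneg (by norm_num) hG0) hδ.le
    have h2 : 0 < (D-3*E)^2 := pow_pos hδ 2
    linarith
  have hring2 : S*(G + D - 3*E)^2 = S*G^2 + S*(2*G*(D-3*E) + (D-3*E)^2) := by ring
  have hP3 : S * (2*G*(D-3*E) + (D-3*E)^2) ≤ 0 := by linarith [hfin, hring2]
  have hSneg : S ≤ 0 := by
    by_contra hS'
    push_neg at hS'
    have hcontra := mul_pos hS' hpos
    linarith
  linarith [hSd, hfar', hDda, ht0, hE0]

end LemI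


section DirB

variable {X : Type*} [MetricSpace X] [ProperSpace X] {b : ℝ → X} {o : X} {π : X → X}
  {κ : ℝ → ℝ}

set_option maxHeartbeats 1000000 in
/-- Direction B: slim condition 2 implies κ-contracting. -/
lemma slim2_to_contracting
    (hX : IsCAT0 X) (hκ : IsSublinearFn κ)
    (hb : IsGeodesicRay b) (hb0 : b 0 = o) (hπ : IsProj b π)
    (hs : SlimCond2 κ o b π) : KappaContracting κ o b π := by
  obtain ⟨c, hc, hslim⟩ := hs
  obtain ⟨hgeo, hcn⟩ := hX
  refine ⟨36 * c, by linarith, ?_⟩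
  intro x y hxy
  set E := c * κ (4 * dist o x) with hE
  have hE0 : 0 ≤ E := mul_nonneg hc (kappa_nonneg hκ _)
  have hnx0 : 0 ≤ dist o x := dist_nonneg
  have hEbound : E ≤ 4 * (c * κ (dist o x)) := by
    have hsc := kappa_scale hκ hnx0 (by norm_num : (1:ℝ) ≤ 4)
    calc E = c * κ (4 * dist o x) := hE
      _ ≤ c * (4 * κ (dist o x)) := mul_le_mul_of_nonneg_left hsc hc
      _ = 4 * (c * κ (dist o x)) := by ring
  suffices h9 : dist (π x) (π y) ≤ 9 * E by
    calc dist (π x) (π y) ≤ 9 * E := h9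
      _ ≤ 36 * (c * κ (dist o x)) := by linarith
      _ = 36 * c * κ (dist o x) := by ring
  have hgx_le : infDist x (rayIm b) ≤ dist o x := infDist_le_norm hb0 x
  have ht_le : dist x y ≤ dist o x := le_trans hxy hgx_le
  have hpx : dist o (π x) ≤ 2 * dist o x := norm_proj_le hb0 hπ x
  have hny : dist o y ≤ 2 * dist o x := by
    have := dist_triangle o x y; linarith
  have hpy : dist o (π y) ≤ 4 * dist o x := by
    have h1 := norm_proj_le hb0 hπ y; linarith
  have hEpair2 : ∀ αp βp : X, dist o (π αp) ≤ 4 * dist o x → dist o (π βp) ≤ 4 * dist o x →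
      c * κ (max (dist o (π αp)) (dist o (π βp))) ≤ E := by
    intro a1 b1 h1 h2
    exact mul_le_mul_of_nonneg_left (hκ.mono (max_le h1 h2)) hc
  by_cases hcase1 : dist x y + 2*E ≤ infDist x (rayIm b)
  · have h1 := proj_close_of_slim hcn hgeo hκ hb hb0 hπ hc hslim x y E
      (hEpair2 x y (by linarith) hpy) hcase1
    linarith
  push_neg at hcase1
  by_cases hcase2 : dist y x + 2*E ≤ infDist y (rayIm b)
  · have h1 := proj_close_of_slim hcn hgeo hκ hb hb0 hπ hc hslim y x E
      (hEpair2 y x hpy (by linarith)) hcase2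
    rw [dist_comm (π y) (π x)] at h1
    linarith
  push_neg at hcase2
  set G := infDist y (rayIm b) with hGdef
  have hG0 : 0 ≤ G := infDist_nonneg
  by_cases hcase3 : G ≤ 6*E
  · obtain ⟨z1, hz1, hbz⟩ := hslim x (π y) (hπ y).1
    have hbz' : infDist (π x) (seg x (π y)) ≤ E := by
      refine le_trans (le_trans hbz ?_) (hEpair2 x y (by linarith) hpy)
      refine mul_le_mul_of_nonneg_left (hκ.mono ?_) hc
      exact dist_o_between hb hb0 (hπ x).1 (hπ y).1 hz1
    obtain ⟨w, hwseg, hwdist⟩ :=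
      (isCompact_seg x (π y)).exists_infDist_eq_dist (seg_nonempty x (π y)) (π x)
    have hpw : dist (π x) w ≤ E := by rw [← hwdist]; exact hbz'
    have hwseg' : dist x w + dist w (π y) = dist x (π y) := hwseg
    have h1 : dist x (π x) ≤ dist x w + dist w (π x) := dist_triangle _ _ _
    have h2 : dist (π x) (π y) ≤ dist (π x) w + dist w (π y) := dist_triangle _ _ _
    have h3 : dist x (π y) ≤ dist x y + dist y (π y) := dist_triangle _ _ _
    have h4 : dist x (π x) = infDist x (rayIm b) := (hπ x).2
    have h5 : dist y (π y) = G := (hπ y).2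
    have h6 : dist w (π x) = dist (π x) w := dist_comm _ _
    linarith
  push_neg at hcase3
  have hmlt : G - 3*E ≤ dist y x := by
    have hdc : dist y x = dist x y := dist_comm y x
    linarith [hcase2.le]
  obtain ⟨m', hm'seg, hym', hm'x⟩ := exists_seg_point hgeo y x (by linarith) hmlt
  have hm'norm : dist o m' ≤ 2 * dist o x := by
    have h7 : dist o m' ≤ dist o x + dist x m' := dist_triangle _ _ _
    have h8 : dist x m' = dist m' x := dist_comm _ _
    have hdc : dist y x = dist x y := dist_comm y x
    have h9 : dist m' x ≤ dist y x := by linarith [hm'x, hG0, hE0, hcase3]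
    linarith
  have hpm' : dist o (π m') ≤ 4 * dist o x := by
    have h7 := norm_proj_le hb0 hπ m'
    linarith
  have hym'_far : dist y m' + 2*E ≤ infDist y (rayIm b) := by
    rw [hym']; linarith
  have hA := proj_close_of_slim hcn hgeo hκ hb hb0 hπ hc hslim y m' E
    (hEpair2 y m' hpy hpm') hym'_far
  have hxm'_far : dist x m' + 2*E ≤ infDist x (rayIm b) := by
    have h8 : dist x m' = dist m' x := dist_comm _ _
    have hdc : dist y x = dist x y := dist_comm y x
    rw [h8, hm'x]
    linarith [hxy]
  have hB := proj_close_of_slim hcn hgeo hκ hb hb0 hπ hc hslim x m' E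
    (hEpair2 x m' (by linarith) hpm') hxm'_far
  have htri := dist_triangle (π x) (π m') (π y)
  have h9 : dist (π m') (π y) = dist (π y) (π m') := dist_comm _ _
  linarith

end DirB


section HelpersA

variable {X : Type*} [MetricSpace X]

/-- CN: midpoints from a common endpoint are (1/2)-contracting. -/
lemma midpoint_common_contract
    (hcn : ∀ x y z m : X, dist y m = dist y z / 2 → dist m z = dist y z / 2 →
      dist x m ^ 2 ≤ (dist x y ^ 2 + dist x z ^ 2) / 2 - dist y z ^ 2 / 4)
    {a c c' m n : X}
    (hm1 : dist a m = dist a c / 2) (hm2 : dist m c = dist a c / 2)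
    (hn1 : dist a n = dist a c' / 2) (hn2 : dist n c' = dist a c' / 2) :
    dist m n ≤ dist c c' / 2 := by
  have h1 := hcn c a c' n hn1 hn2
  have h2 := hcn n a c m hm1 hm2
  have e1 : dist n a = dist a n := dist_comm _ _
  have e2 : dist n m = dist m n := dist_comm _ _
  have e3 : dist c a = dist a c := dist_comm _ _
  have e4 : dist c n = dist n c := dist_comm _ _
  rw [e1, hn1, e2] at h2
  rw [e3, e4] at h1
  refine le_of_sq_le_sq' ?_ (by positivity)
  nlinarith [h1, h2]

/-- CN: midpoints are (1/2)-contracting (general form). -/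
lemma midpoint_contract
    (hcn : ∀ x y z m : X, dist y m = dist y z / 2 → dist m z = dist y z / 2 →
      dist x m ^ 2 ≤ (dist x y ^ 2 + dist x z ^ 2) / 2 - dist y z ^ 2 / 4)
    (hgeo : GeodesicSpace X)
    {a c a' c' m n : X}
    (hm1 : dist a m = dist a c / 2) (hm2 : dist m c = dist a c / 2)
    (hn1 : dist a' n = dist a' c' / 2) (hn2 : dist n c' = dist a' c' / 2) :
    dist m n ≤ (dist a a' + dist c c') / 2 := by
  obtain ⟨σ, hσ0, hσd, hσ⟩ := hgeo a c'
  have hd0 : (0:ℝ) ≤ dist a c' := dist_nonneg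
  set k := σ (dist a c' / 2) with hk
  have hk1 : dist a k = dist a c' / 2 := by
    have hh : dist (σ 0) (σ (dist a c'/2)) = |(0:ℝ) - dist a c'/2| :=
      hσ 0 ⟨le_rfl, hd0⟩ _ ⟨by linarith, by linarith⟩
    rw [hσ0] at hh
    rw [hk, hh, abs_of_nonpos (by linarith)]; ring
  have hk2 : dist k c' = dist a c' / 2 := by
    have hh : dist (σ (dist a c'/2)) (σ (dist a c')) = |dist a c'/2 - dist a c'| :=
      hσ _ ⟨by linarith, by linarith⟩ _ ⟨hd0, le_rfl⟩
    rw [hσd] at hh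
    rw [hk, hh, abs_of_nonpos (by linarith)]; ring
  have hstep1 : dist m k ≤ dist c c' / 2 :=
    midpoint_common_contract hcn hm1 hm2 hk1 hk2
  -- now k and n are midpoints of (a,c') and (a',c'): common endpoint c'
  have hk1' : dist c' k = dist c' a / 2 := by
    rw [dist_comm c' k, dist_comm c' a, hk2]
  have hk2' : dist k a = dist c' a / 2 := by
    rw [dist_comm k a, dist_comm c' a, hk1]
  have hn1' : dist c' n = dist c' a' / 2 := by
    rw [dist_comm c' n, dist_comm c' a', hn2]
  have hn2' : dist n a' = dist c' a' / 2 := by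
    rw [dist_comm n a', dist_comm c' a', hn1]
  have hstep2 : dist k n ≤ dist a a' / 2 :=
    midpoint_common_contract hcn hk1' hk2' hn1' hn2'
  calc dist m n ≤ dist m k + dist k n := dist_triangle _ _ _
    _ ≤ dist c c' / 2 + dist a a' / 2 := add_le_add hstep1 hstep2
    _ = (dist a a' + dist c c') / 2 := by ring

/-- Convexity of the distance between two geodesics (proportional parametrization). -/
lemma two_geodesic_convexity
    (hcn : ∀ x y z m : X, dist y m = dist y z / 2 → dist m z = dist y z / 2 →
      dist x m ^ 2 ≤ (dist x y ^ 2 + dist x z ^ 2) / 2 - dist y z ^ 2 / 4)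
    (hgeo : GeodesicSpace X)
    {γ ρ : ℝ → X} {L L' : ℝ} (hL : 0 ≤ L) (hL' : 0 ≤ L')
    (hγ : ∀ s ∈ Icc (0:ℝ) L, ∀ t ∈ Icc (0:ℝ) L, dist (γ s) (γ t) = |s - t|)
    (hρ : ∀ s ∈ Icc (0:ℝ) L', ∀ t ∈ Icc (0:ℝ) L', dist (ρ s) (ρ t) = |s - t|)
    {μ : ℝ} (hμ : μ ∈ Icc (0:ℝ) 1) :
    dist (γ (μ*L)) (ρ (μ*L')) ≤ (1-μ) * dist (γ 0) (ρ 0) + μ * dist (γ L) (ρ L') := by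
  set D0 := dist (γ 0) (ρ 0) with hD0
  set D1 := dist (γ L) (ρ L') with hD1
  set H : ℝ → ℝ := fun ν => dist (γ (ν*L)) (ρ (ν*L')) - ((1-ν) * D0 + ν * D1) with hH
  have hmemL : ∀ ν ∈ Icc (0:ℝ) 1, ν * L ∈ Icc (0:ℝ) L := by
    intro ν hν
    constructor
    · exact mul_nonneg hν.1 hL
    · calc ν * L ≤ 1 * L := mul_le_mul_of_nonneg_right hν.2 hL
        _ = L := one_mul L
  have hmemL' : ∀ ν ∈ Icc (0:ℝ) 1, ν * L' ∈ Icc (0:ℝ) L' := by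
    intro ν hν
    constructor
    · exact mul_nonneg hν.1 hL'
    · calc ν * L' ≤ 1 * L' := mul_le_mul_of_nonneg_right hν.2 hL'
        _ = L' := one_mul L'
  have hcont : ContinuousOn H (Icc 0 1) := by
    apply ContinuousOn.sub
    · have h1 : ∀ ν ∈ Icc (0:ℝ) 1, ∀ ν' ∈ Icc (0:ℝ) 1,
          dist (dist (γ (ν*L)) (ρ (ν*L'))) (dist (γ (ν'*L)) (ρ (ν'*L'))) ≤
            (⟨L + L', by positivity⟩ : NNReal) * dist ν ν' := by
        intro ν hν ν' hν'
        rw [Real.dist_eq, Real.dist_eq]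
        have t1 : |dist (γ (ν*L)) (ρ (ν*L')) - dist (γ (ν'*L)) (ρ (ν'*L'))| ≤
            dist (γ (ν*L)) (γ (ν'*L)) + dist (ρ (ν*L')) (ρ (ν'*L')) :=
          by
          have := dist_dist_dist_le (γ (ν*L)) (ρ (ν*L')) (γ (ν'*L)) (ρ (ν'*L'))
          rwa [Real.dist_eq] at this
        have t2 : dist (γ (ν*L)) (γ (ν'*L)) = |ν*L - ν'*L| :=
          hγ _ (hmemL ν hν) _ (hmemL ν' hν')
        have t3 : dist (ρ (ν*L')) (ρ (ν'*L')) = |ν*L' - ν'*L'| :=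
          hρ _ (hmemL' ν hν) _ (hmemL' ν' hν')
        have t4 : |ν*L - ν'*L| = |ν - ν'| * L := by
          rw [show ν*L - ν'*L = (ν - ν')*L by ring, abs_mul, abs_of_nonneg hL]
        have t5 : |ν*L' - ν'*L'| = |ν - ν'| * L' := by
          rw [show ν*L' - ν'*L' = (ν - ν')*L' by ring, abs_mul, abs_of_nonneg hL']
        have : (((⟨L + L', by positivity⟩ : NNReal)) : ℝ) = L + L' := rfl
        rw [this]
        calc |dist (γ (ν*L)) (ρ (ν*L')) - dist (γ (ν'*L)) (ρ (ν'*L'))|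
            ≤ |ν - ν'| * L + |ν - ν'| * L' := by rw [← t4, ← t5]; linarith [t1, t2.symm ▸ t1]
          _ = (L + L') * |ν - ν'| := by ring
      exact (LipschitzOnWith.of_dist_le_mul h1).continuousOn
    · fun_prop
  have hH0 : H 0 ≤ 0 := by
    simp only [hH]
    norm_num
    exact hD0.symm.le
  have hH1 : H 1 ≤ 0 := by
    simp only [hH]
    norm_num
    exact hD1.symm.le
  have hmid : ∀ u ∈ Icc (0:ℝ) 1, ∀ v ∈ Icc (0:ℝ) 1, H ((u + v) / 2) ≤ (H u + H v) / 2 := by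
    intro u hu v hv
    have humem : (u+v)/2 ∈ Icc (0:ℝ) 1 := ⟨by linarith [hu.1, hv.1], by linarith [hu.2, hv.2]⟩
    have hm1 : dist (γ (u*L)) (γ (((u+v)/2)*L)) = dist (γ (u*L)) (γ (v*L)) / 2 := by
      rw [hγ _ (hmemL u hu) _ (hmemL _ humem), hγ _ (hmemL u hu) _ (hmemL v hv)]
      rw [show u*L - ((u+v)/2)*L = ((u - v)*L)/2 by ring,
        show u*L - v*L = (u-v)*L by ring, abs_div]
      norm_num
    have hm2 : dist (γ (((u+v)/2)*L)) (γ (v*L)) = dist (γ (u*L)) (γ (v*L)) / 2 := by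
      rw [hγ _ (hmemL _ humem) _ (hmemL v hv), hγ _ (hmemL u hu) _ (hmemL v hv)]
      rw [show ((u+v)/2)*L - v*L = ((u - v)*L)/2 by ring,
        show u*L - v*L = (u-v)*L by ring, abs_div]
      norm_num
    have hn1 : dist (ρ (u*L')) (ρ (((u+v)/2)*L')) = dist (ρ (u*L')) (ρ (v*L')) / 2 := by
      rw [hρ _ (hmemL' u hu) _ (hmemL' _ humem), hρ _ (hmemL' u hu) _ (hmemL' v hv)]
      rw [show u*L' - ((u+v)/2)*L' = ((u - v)*L')/2 by ring,
        show u*L' - v*L' = (u-v)*L' by ring, abs_div]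
      norm_num
    have hn2 : dist (ρ (((u+v)/2)*L')) (ρ (v*L')) = dist (ρ (u*L')) (ρ (v*L')) / 2 := by
      rw [hρ _ (hmemL' _ humem) _ (hmemL' v hv), hρ _ (hmemL' u hu) _ (hmemL' v hv)]
      rw [show ((u+v)/2)*L' - v*L' = ((u - v)*L')/2 by ring,
        show u*L' - v*L' = (u-v)*L' by ring, abs_div]
      norm_num
    have hmc := midpoint_contract hcn hgeo hm1 hm2 hn1 hn2
    simp only [hH]
    have : (1 - (u+v)/2) * D0 + ((u+v)/2) * D1 =
        (((1-u)*D0 + u*D1) + ((1-v)*D0 + v*D1))/2 := by ring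
    linarith [hmc, this]
  have := midpoint_convex_max_principle hcont hH0 hH1 hmid μ hμ
  simp only [hH] at this
  linarith

end HelpersA


section HelpersB

variable {X : Type*} [MetricSpace X] {b : ℝ → X} {o : X} {π : X → X} {κ : ℝ → ℝ}

/-- Uniqueness of nearest points on the ray. -/
lemma nearest_unique
    (hcn : ∀ x y z m : X, dist y m = dist y z / 2 → dist m z = dist y z / 2 →
      dist x m ^ 2 ≤ (dist x y ^ 2 + dist x z ^ 2) / 2 - dist y z ^ 2 / 4)
    (hb : IsGeodesicRay b)
    {v p₁ p₂ : X} (hp₁ : p₁ ∈ rayIm b) (hp₂ : p₂ ∈ rayIm b)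
    (h₁ : dist v p₁ = infDist v (rayIm b)) (h₂ : dist v p₂ = infDist v (rayIm b)) :
    p₁ = p₂ := by
  obtain ⟨u₁, hu₁, rfl⟩ := hp₁
  obtain ⟨u₂, hu₂, rfl⟩ := hp₂
  replace hu₁ : (0:ℝ) ≤ u₁ := hu₁
  replace hu₂ : (0:ℝ) ≤ u₂ := hu₂
  set w := (u₁ + u₂)/2 with hw
  have hw0 : (0:ℝ) ≤ w := by rw [hw]; linarith
  have habs : |(u₁ - u₂)/2| = |u₁ - u₂|/2 := by rw [abs_div]; norm_num
  have hm1 : dist (b u₁) (b w) = dist (b u₁) (b u₂) / 2 := by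
    rw [hb u₁ w hu₁ hw0, hb u₁ u₂ hu₁ hu₂, hw,
      show u₁ - (u₁+u₂)/2 = (u₁ - u₂)/2 by ring, habs]
  have hm2 : dist (b w) (b u₂) = dist (b u₁) (b u₂) / 2 := by
    rw [hb w u₂ hw0 hu₂, hb u₁ u₂ hu₁ hu₂, hw,
      show (u₁+u₂)/2 - u₂ = (u₁ - u₂)/2 by ring, habs]
  have hcnv := hcn v (b u₁) (b u₂) (b w) hm1 hm2
  have hinf : infDist v (rayIm b) ≤ dist v (b w) :=
    infDist_le_dist_of_mem ⟨w, mem_Ici.mpr hw0, rfl⟩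
  have hge : infDist v (rayIm b)^2 ≤ dist v (b w)^2 :=
    pow_le_pow_left₀ infDist_nonneg hinf 2
  rw [h₁, h₂] at hcnv
  have hd0 : (0:ℝ) ≤ dist (b u₁) (b u₂) := dist_nonneg
  have hle : dist (b u₁) (b u₂) ≤ 0 := by nlinarith [hcnv, hge, hd0]
  exact eq_of_dist_eq_zero (le_antisymm hle hd0)

/-- Points on a geodesic from the projection to the point project to the same point. -/
lemma proj_on_seg_eq
    (hcn : ∀ x y z m : X, dist y m = dist y z / 2 → dist m z = dist y z / 2 →
      dist x m ^ 2 ≤ (dist x y ^ 2 + dist x z ^ 2) / 2 - dist y z ^ 2 / 4)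
    (hb : IsGeodesicRay b) (hπ : IsProj b π)
    {x ξ : X} (hξ : dist (π x) ξ + dist ξ x = dist (π x) x) :
    π ξ = π x := by
  have h1 : infDist x (rayIm b) ≤ infDist ξ (rayIm b) + dist x ξ := infDist_le_infDist_add_dist
  have h2 : infDist ξ (rayIm b) ≤ dist ξ (π x) := infDist_le_dist_of_mem (hπ x).1
  have hx : dist x (π x) = infDist x (rayIm b) := (hπ x).2
  have e1 : dist ξ (π x) = dist (π x) ξ := dist_comm _ _
  have e2 : dist ξ x = dist x ξ := dist_comm _ _
  have e3 : dist (π x) x = dist x (π x) := dist_comm _ _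
  have h3 : dist ξ (π x) = infDist ξ (rayIm b) := by
    refine le_antisymm ?_ h2
    rw [e1]
    linarith
  exact nearest_unique hcn hb (hπ ξ).1 (hπ x).1 (hπ ξ).2 h3

/-- The exact Pythagorean inequality for the nearest-point projection to the ray. -/
lemma ray_pythagoras
    (hcn : ∀ x y z m : X, dist y m = dist y z / 2 → dist m z = dist y z / 2 →
      dist x m ^ 2 ≤ (dist x y ^ 2 + dist x z ^ 2) / 2 - dist y z ^ 2 / 4)
    (hb : IsGeodesicRay b) (hπ : IsProj b π)
    (v : X) {u sv : ℝ} (hu : 0 ≤ u) (hsv : 0 ≤ sv) (hproj : b sv = π v) :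
    dist v (π v) ^ 2 + (u - sv) ^ 2 ≤ dist v (b u) ^ 2 := by
  by_contra hcon
  push_neg at hcon
  set ψ : ℝ → ℝ := fun w => dist v (b w) ^ 2 - (w - sv)^2 with hψ
  have hψs : ψ sv = dist v (π v)^2 := by
    simp only [hψ, hproj]; ring
  set δ := ψ sv - ψ u with hδdef
  have hδ : 0 < δ := by
    rw [hδdef, hψs]
    simp only [hψ]
    linarith
  -- chord bound via max principle
  set uf : ℝ → ℝ := fun τ => sv + τ*(u - sv) with huf
  have hufmem : ∀ τ ∈ Icc (0:ℝ) 1, 0 ≤ uf τ := by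
    intro τ hτ
    simp only [huf]
    rcases le_total sv u with h | h
    · have : 0 ≤ τ * (u - sv) := mul_nonneg hτ.1 (by linarith)
      linarith
    · have h7 : τ * (sv - u) ≤ 1 * (sv - u) := mul_le_mul_of_nonneg_right hτ.2 (by linarith)
      have : τ * (u - sv) = -(τ * (sv - u)) := by ring
      rw [this]
      linarith
  set H : ℝ → ℝ := fun τ => ψ (uf τ) - ((1-τ) * ψ sv + τ * ψ u) with hH
  have hH0 : H 0 ≤ 0 := by
    simp only [hH, huf, hψ]
    norm_num
  have hH1 : H 1 ≤ 0 := by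
    simp only [hH, huf, hψ]
    norm_num
  -- midpoint convexity of ψ
  have hψmid : ∀ w, 0 ≤ w → ∀ w', 0 ≤ w' → ψ ((w + w')/2) ≤ (ψ w + ψ w')/2 := by
    intro w hw w' hw'
    have hwm : (0:ℝ) ≤ (w + w')/2 := by linarith
    have habs : |(w - w')/2| = |w - w'|/2 := by rw [abs_div]; norm_num
    have hm1 : dist (b w) (b ((w+w')/2)) = dist (b w) (b w') / 2 := by
      rw [hb w _ hw hwm, hb w w' hw hw', show w - (w+w')/2 = (w - w')/2 by ring, habs]
    have hm2 : dist (b ((w+w')/2)) (b w') = dist (b w) (b w') / 2 := by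
      rw [hb _ w' hwm hw', hb w w' hw hw', show (w+w')/2 - w' = (w - w')/2 by ring, habs]
    have hcnv := hcn v (b w) (b w') (b ((w+w')/2)) hm1 hm2
    rw [hb w w' hw hw', sq_abs] at hcnv
    simp only [hψ]
    nlinarith [hcnv]
  have hmid : ∀ τ ∈ Icc (0:ℝ) 1, ∀ τ' ∈ Icc (0:ℝ) 1, H ((τ + τ') / 2) ≤ (H τ + H τ') / 2 := by
    intro τ hτ τ' hτ'
    have hmm : (τ + τ')/2 ∈ Icc (0:ℝ) 1 := ⟨by linarith [hτ.1, hτ'.1], by linarith [hτ.2, hτ'.2]⟩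
    have he : uf ((τ + τ')/2) = (uf τ + uf τ')/2 := by simp only [huf]; ring
    have := hψmid (uf τ) (hufmem τ hτ) (uf τ') (hufmem τ' hτ')
    simp only [hH]
    rw [he]
    have haff : (1-(τ+τ')/2) * ψ sv + ((τ+τ')/2) * ψ u =
        (((1-τ) * ψ sv + τ * ψ u) + ((1-τ') * ψ sv + τ' * ψ u))/2 := by ring
    linarith
  have hcont : ContinuousOn H (Icc 0 1) := by
    apply ContinuousOn.sub
    · apply ContinuousOn.sub
      · have h1 : ∀ τ ∈ Icc (0:ℝ) 1, ∀ τ' ∈ Icc (0:ℝ) 1,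
            dist (dist v (b (uf τ))) (dist v (b (uf τ'))) ≤
              (⟨|u - sv|, abs_nonneg _⟩ : NNReal) * dist τ τ' := by
          intro τ hτ τ' hτ'
          have t1 : dist (dist v (b (uf τ))) (dist v (b (uf τ'))) ≤ dist (b (uf τ)) (b (uf τ')) :=
            dist_dist_dist_le_right _ _ _
          have t2 : dist (b (uf τ)) (b (uf τ')) = |uf τ - uf τ'| :=
            hb _ _ (hufmem τ hτ) (hufmem τ' hτ')
          have t3 : |uf τ - uf τ'| = |τ - τ'| * |u - sv| := by
            simp only [huf]
            rw [show sv + τ*(u-sv) - (sv + τ'*(u-sv)) = (τ - τ')*(u-sv) by ring, abs_mul]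
          have t4 : (((⟨|u - sv|, abs_nonneg _⟩ : NNReal)) : ℝ) = |u - sv| := rfl
          rw [t4, Real.dist_eq]
          rw [t2, t3] at t1
          calc dist (dist v (b (uf τ))) (dist v (b (uf τ'))) ≤ |τ - τ'| * |u - sv| := t1
            _ = |u - sv| * |τ - τ'| := by ring
        have hc1 : ContinuousOn (fun τ => dist v (b (uf τ))) (Icc 0 1) :=
          (LipschitzOnWith.of_dist_le_mul h1).continuousOn
        exact fun τ hτ => (hc1 τ hτ).pow 2
      · fun_prop
    · fun_prop
  have hmax := midpoint_convex_max_principle hcont hH0 hH1 hmid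
  -- pick the witness τ*
  set κ2 := (u - sv)^2 with hκ2
  have hκ2n : 0 ≤ κ2 := sq_nonneg _
  set τs := min 1 (δ/(2*κ2+1)) with hτs
  have hτpos : 0 < τs := lt_min one_pos (by positivity)
  have hτle : τs ≤ 1 := min_le_left _ _
  have hτIcc : τs ∈ Icc (0:ℝ) 1 := ⟨hτpos.le, hτle⟩
  have hHτ := hmax τs hτIcc
  simp only [hH] at hHτ
  -- φ(uτ) ≥ ψ sv  (distance to ray at least infDist)
  have hφlow : dist v (π v) ≤ dist v (b (uf τs)) := by
    rw [(hπ v).2]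
    exact infDist_le_dist_of_mem ⟨uf τs, mem_Ici.mpr (hufmem τs hτIcc), rfl⟩
  have hφlow2 : dist v (π v)^2 ≤ dist v (b (uf τs))^2 :=
    pow_le_pow_left₀ dist_nonneg hφlow 2
  have hquad : (uf τs - sv)^2 = τs^2 * κ2 := by
    simp only [huf, hκ2]; ring
  -- combine: 0 ≤ -τs*δ + τs^2*κ2
  have hcomb : 0 ≤ -(τs*δ) + τs^2*κ2 := by
    have e : ψ (uf τs) = dist v (b (uf τs))^2 - (uf τs - sv)^2 := rfl
    have e2 : (1-τs) * ψ sv + τs * ψ u = ψ sv - τs * δ := by rw [hδdef]; ring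
    rw [e, e2, hquad] at hHτ
    rw [hψs] at hHτ
    linarith [hφlow2]
  have hsmall : τs * κ2 ≤ δ/2 := by
    have h8 : τs ≤ δ/(2*κ2+1) := min_le_right _ _
    have h9 : τs * κ2 ≤ (δ/(2*κ2+1)) * κ2 := mul_le_mul_of_nonneg_right h8 hκ2n
    have h10 : (δ/(2*κ2+1)) * κ2 ≤ δ/2 := by
      rw [div_mul_eq_mul_div, div_le_div_iff₀ (by positivity) (by norm_num)]
      nlinarith [hδ.le, hκ2n]
    linarith
  clear_value ψ uf H κ2 τs δ
  have h11 : τs^2 * κ2 = τs * (τs * κ2) := by ring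
  have h12 : τs * (τs * κ2) ≤ τs * (δ/2) := mul_le_mul_of_nonneg_left hsmall hτpos.le
  have hpos2 : 0 < τs * δ := mul_pos hτpos hδ
  have h14 : τs * (δ/2) = (τs*δ)/2 := by ring
  linarith [hcomb, h11, h12, h14, hpos2]

/-- Subadditivity of sublinear functions. -/
lemma kappa_subadd (hκ : IsSublinearFn κ) {a c : ℝ} (ha : 0 ≤ a) (hc : 0 ≤ c) :
    κ (a + c) ≤ κ a + κ c := by
  rcases eq_or_lt_of_le (by linarith : (0:ℝ) ≤ a + c) with h | h
  · have ha0 : a = 0 := by linarith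
    have hc0 : c = 0 := by linarith
    rw [ha0, hc0]
    have h0 := kappa_nonneg hκ 0
    simp only [add_zero]
    linarith
  · have key : ∀ e f : ℝ, 0 ≤ e → 0 ≤ f → e + f = a + c →
        (e/(a+c)) * κ (a+c) ≤ κ e := by
      intro e f he hf hef
      have hmem1 : a + c ∈ Ici (0:ℝ) := mem_Ici.mpr h.le
      have hmem2 : (0:ℝ) ∈ Ici (0:ℝ) := mem_Ici.mpr le_rfl
      have hw1 : (0:ℝ) ≤ e/(a+c) := by positivity
      have hw2 : (0:ℝ) ≤ f/(a+c) := by positivity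
      have hw3 : e/(a+c) + f/(a+c) = 1 := by field_simp; linarith
      have hconc := hκ.concave.2 hmem1 hmem2 hw1 hw2 hw3
      have harg : (e/(a+c)) • (a+c) + (f/(a+c)) • (0:ℝ) = e := by
        simp only [smul_eq_mul, mul_zero, add_zero]
        field_simp
      rw [harg] at hconc
      simp only [smul_eq_mul] at hconc
      have := kappa_nonneg hκ 0
      nlinarith [hconc, mul_nonneg hw2 this]
    have k1 := key a c ha hc rfl
    have k2 := key c a hc ha (by ring)
    have hsum : (a/(a+c)) * κ (a+c) + (c/(a+c)) * κ (a+c) = κ (a+c) := by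
      field_simp
    linarith

end HelpersB


section DirA

variable {X : Type*} [MetricSpace X] [ProperSpace X] {b : ℝ → X} {o : X} {π : X → X}
  {κ : ℝ → ℝ}

set_option maxHeartbeats 1600000 in
/-- Direction A: κ-contracting implies slim condition 2. -/
lemma contracting_to_slim2
    (hX : IsCAT0 X) (hκ : IsSublinearFn κ)
    (hb : IsGeodesicRay b) (hb0 : b 0 = o) (hπ : IsProj b π)
    (hs : KappaContracting κ o b π) : SlimCond2 κ o b π := by
  obtain ⟨c₀, hc₀, hcontr⟩ := hs
  obtain ⟨hgeo, hcn⟩ := hX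
  have hκ1 : (0:ℝ) ≤ κ 1 := kappa_nonneg hκ 1
  refine ⟨32 * c₀ * (1 + κ 1), by positivity, ?_⟩
  intro x y hy
  obtain ⟨r, hr, rfl⟩ := hy
  replace hr : (0:ℝ) ≤ r := hr
  obtain ⟨s, hs0, hsb⟩ := (hπ x).1
  replace hs0 : (0:ℝ) ≤ s := hs0
  set p := π x with hp
  set M := max s r with hM
  have hM0 : (0:ℝ) ≤ M := le_trans hs0 (le_max_left _ _)
  have hop : dist o p = s := by rw [← hsb]; exact ray_param_dist hb hb0 hs0
  have hor : dist o (b r) = r := ray_param_dist hb hb0 hr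
  set EE := c₀ * κ (4*(M+1)) with hEE
  have hEE0 : 0 ≤ EE := mul_nonneg hc₀ (kappa_nonneg hκ _)
  set d := dist x p with hd
  have hd_inf : d = infDist x (rayIm b) := (hπ x).2
  set Δ := dist p (b r) with hΔ
  have hΔ0 : (0:ℝ) ≤ Δ := dist_nonneg
  have hΔM : Δ ≤ M := by
    have : dist p (b r) = |s - r| := by rw [← hsb]; exact hb s r hs0 hr
    rw [hΔ, this]
    rcases le_total s r with h | h
    · rw [abs_of_nonpos (by linarith)]
      have := le_max_right s r; rw [← hM] at this; linarith
    · rw [abs_of_nonneg (by linarith)]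
      have := le_max_left s r; rw [← hM] at this; linarith
  -- uniform bound on jumps for points near b r
  have hjump : ∀ v w : X, dist o v ≤ 4*M + 1 → dist v w ≤ infDist v (rayIm b) →
      dist (π v) (π w) ≤ EE := by
    intro v w hv hvw
    have h1 := hcontr v w hvw
    have h2 : dist o v ≤ 4*(M+1) := by linarith
    calc dist (π v) (π w) ≤ c₀ * κ (dist o v) := h1
      _ ≤ EE := mul_le_mul_of_nonneg_left (hκ.mono h2) hc₀
  -- the two-step collapse walk
  have walk : ∀ x' : X, x' ∈ seg x (b r) → dist x' (b r) ≤ 3*Δ + 1 → dist p (π x') ≤ EE →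
      infDist p (seg x (b r)) ≤ 4 * EE := by
    intro x' hx'seg hx'A hx'P
    have hg0 : infDist x' (rayIm b) ≤ dist x' (b r) :=
      infDist_le_dist_of_mem ⟨r, mem_Ici.mpr hr, rfl⟩
    have hg0n : 0 ≤ infDist x' (rayIm b) := infDist_nonneg
    obtain ⟨w₁, hw₁seg, hw₁d, hw₁y⟩ := exists_seg_point hgeo x' (b r) hg0n hg0
    have hnormx' : dist o x' ≤ 4*M + 1 := by
      have h1 := dist_triangle o (b r) x'
      have h2 : dist (b r) x' = dist x' (b r) := dist_comm _ _
      have h3 : r ≤ M := le_max_right s r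
      linarith [hor, hx'A, hΔM]
    have hE1 : dist (π x') (π w₁) ≤ EE := hjump x' w₁ hnormx' (le_of_eq hw₁d)
    have hw₁A : dist w₁ (b r) ≤ 3*Δ + 1 := by linarith [hw₁y, hg0n]
    have hnormw₁ : dist o w₁ ≤ 4*M + 1 := by
      have h1 := dist_triangle o (b r) w₁
      have h2 : dist (b r) w₁ = dist w₁ (b r) := dist_comm _ _
      have h3 : r ≤ M := le_max_right s r
      linarith [hor, hΔM]
    have hg1 : infDist w₁ (rayIm b) ≤ dist w₁ (b r) :=
      infDist_le_dist_of_mem ⟨r, mem_Ici.mpr hr, rfl⟩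
    have hg1n : 0 ≤ infDist w₁ (rayIm b) := infDist_nonneg
    obtain ⟨w₂, hw₂seg, hw₂d, hw₂y⟩ := exists_seg_point hgeo w₁ (b r) hg1n hg1
    have hE2 : dist (π w₁) (π w₂) ≤ EE := hjump w₁ w₂ hnormw₁ (le_of_eq hw₂d)
    set Q₀ := dist (π x') (b r) with hQ₀
    rcases le_or_gt Q₀ (dist (π x') (π w₁) + dist (π w₁) (π w₂)) with hcaseq | hcaseq
    · -- close to the end of the ray already
      have h1 : infDist p (seg x (b r)) ≤ dist p (b r) :=
        infDist_le_dist_of_mem (right_mem_seg _ _)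
      have h2 : dist p (b r) ≤ dist p (π x') + Q₀ := dist_triangle _ _ _
      linarith
    · -- main case: the collapse
      have hcollapse : infDist w₁ (rayIm b) ≤ dist (π x') (π w₁) + dist (π w₁) (π w₂) := by
        by_contra hcon
        push_neg at hcon
        -- Pythagoras at w₂
        obtain ⟨s₂, hs₂0, hs₂b⟩ := (hπ w₂).1
        replace hs₂0 : (0:ℝ) ≤ s₂ := hs₂0
        have hpyth := ray_pythagoras hcn hb hπ w₂ hr hs₂0 hs₂b
        set Q₂ := dist (π w₂) (b r) with hQ₂def
        have hQ₂eq : Q₂ = |s₂ - r| := by rw [hQ₂def, ← hs₂b]; exact hb s₂ r hs₂0 hr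
        have hQ₂sq : Q₂^2 = (r - s₂)^2 := by rw [hQ₂eq, sq_abs]; ring
        have hQ₂le : Q₂ ≤ dist w₂ (b r) := by
          refine le_of_sq_le_sq' ?_ dist_nonneg
          have h4 : (0:ℝ) ≤ dist w₂ (π w₂)^2 := sq_nonneg _
          rw [hQ₂sq]
          linarith [hpyth]
        -- triangle chain for Q₂ lower bound
        have hQ₂low : Q₀ - dist (π x') (π w₁) - dist (π w₁) (π w₂) ≤ Q₂ := by
          have h5 := dist_triangle (π x') (π w₁) (b r)
          have h6 := dist_triangle (π w₁) (π w₂) (b r)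
          rw [← hQ₀] at h5
          rw [← hQ₂def] at h6
          linarith
        -- upper bound for dist w₂ (b r)
        have hup : dist w₂ (b r) ≤ Q₀ - infDist w₁ (rayIm b) := by
          have h7 : dist x' (b r) ≤ dist x' (π x') + Q₀ := dist_triangle _ _ _
          have h8 : dist x' (π x') = infDist x' (rayIm b) := (hπ x').2
          linarith [hw₂y, hw₁y]
        linarith
      -- conclude from the collapse
      have hmem : w₁ ∈ seg x (b r) := seg_trans hx'seg hw₁seg
      have h1 : infDist p (seg x (b r)) ≤ dist p w₁ := infDist_le_dist_of_mem hmem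
      have h2 : dist p w₁ ≤ dist p (π x') + dist (π x') (π w₁) + dist (π w₁) w₁ := by
        have t1 := dist_triangle p (π x') w₁
        have t2 := dist_triangle (π x') (π w₁) w₁
        linarith
      have h3 : dist (π w₁) w₁ = infDist w₁ (rayIm b) := by
        rw [dist_comm]; exact (hπ w₁).2
      linarith [hE1, hE2]
  -- construct the starting point x'
  have hkey : infDist p (seg x (b r)) ≤ 4 * EE := by
    rcases le_or_gt d (2*Δ + 1) with hcase | hcase
    · -- x itself is close enough
      refine walk x (left_mem_seg _ _) ?_ ?_
      · have h1 := dist_triangle x p (b r)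
        rw [← hd, ← hΔ] at h1
        linarith
      · have : dist p (π x) = 0 := by rw [hp]; simp
        linarith
    · -- use the cone point
      obtain ⟨γ, hγ0, hγL, hγiso⟩ := hgeo x (b r)
      obtain ⟨ζ, hζ0, hζd, hζiso⟩ := hgeo p x
      set L := dist x (b r) with hL
      have hLd : d ≤ L := by
        rw [hd_inf, hL]; exact infDist_le_dist_of_mem ⟨r, mem_Ici.mpr hr, rfl⟩
      have hLΔ : L ≤ d + Δ := by
        have := dist_triangle x p (b r); rw [← hL, ← hd, ← hΔ] at this; exact this
      have hΔd : Δ ≤ d := by linarith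
      have hL0 : (0:ℝ) < L := by linarith
      have hdpx : dist p x = d := by rw [hd]; exact dist_comm _ _
      have hd0 : (0:ℝ) < d := by linarith
      -- x' := γ (L - 2Δ)
      set x' := γ (L - 2*Δ) with hx'
      have hmem1 : L - 2*Δ ∈ Icc (0:ℝ) L := ⟨by linarith, by linarith⟩
      have hmem0 : (0:ℝ) ∈ Icc (0:ℝ) L := ⟨le_rfl, by linarith⟩
      have hmemL : L ∈ Icc (0:ℝ) L := ⟨by linarith, le_rfl⟩
      have hxx' : dist x x' = L - 2*Δ := by
        have hh : dist (γ 0) (γ (L - 2*Δ)) = |0 - (L - 2*Δ)| := hγiso 0 hmem0 _ hmem1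
        rw [hγ0] at hh
        rw [hx', hh, abs_of_nonpos (by linarith)]; ring
      have hx'y : dist x' (b r) = 2*Δ := by
        have hh : dist (γ (L - 2*Δ)) (γ L) = |(L - 2*Δ) - L| := hγiso _ hmem1 L hmemL
        rw [hγL] at hh
        rw [hx', hh, abs_of_nonpos (by linarith)]; ring
      have hx'seg : x' ∈ seg x (b r) := by
        simp only [seg, Set.mem_setOf_eq]
        rw [hxx', hx'y, ← hL]; ring
      -- the reversed cone geodesic from x to p
      set ρ : ℝ → X := fun τ => ζ (dist p x - τ) with hρ
      have hρiso : ∀ u ∈ Icc (0:ℝ) (dist p x), ∀ v ∈ Icc (0:ℝ) (dist p x),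
          dist (ρ u) (ρ v) = |u - v| := by
        intro u hu v hv
        have h1 : dist p x - u ∈ Icc (0:ℝ) (dist p x) := ⟨by linarith [hu.2], by linarith [hu.1]⟩
        have h2 : dist p x - v ∈ Icc (0:ℝ) (dist p x) := ⟨by linarith [hv.2], by linarith [hv.1]⟩
        simp only [hρ]
        rw [hζiso _ h1 _ h2, show dist p x - u - (dist p x - v) = v - u by ring, abs_sub_comm]
      set μ := (L - 2*Δ)/L with hμ
      have hμmem : μ ∈ Icc (0:ℝ) 1 := by
        constructor
        · rw [hμ]; exact div_nonneg (by linarith) hL0.le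
        · rw [hμ, div_le_one hL0]; linarith
      have hconv := two_geodesic_convexity hcn hgeo (le_of_lt hL0) dist_nonneg hγiso hρiso hμmem
      have hμL : μ * L = L - 2*Δ := by rw [hμ]; field_simp
      have hρ0 : ρ 0 = x := by simp only [hρ]; rw [sub_zero, hζd]
      have hρend : ρ (dist p x) = p := by simp only [hρ]; rw [sub_self, hζ0]
      rw [hμL, hγ0, hγL, hρ0, hρend] at hconv
      have hdist0 : dist x x = 0 := dist_self x
      have hbrp : dist (b r) p = Δ := by rw [hΔ]; exact dist_comm _ _
      rw [hdist0, hbrp] at hconv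
      -- the cone point ξ
      set ξ := ρ (μ * dist p x) with hξ
      set τξ := dist p x - μ * dist p x with hτξ
      have hμd : μ * dist p x ∈ Icc (0:ℝ) (dist p x) := by
        constructor
        · exact mul_nonneg hμmem.1 dist_nonneg
        · calc μ * dist p x ≤ 1 * dist p x := mul_le_mul_of_nonneg_right hμmem.2 dist_nonneg
            _ = dist p x := one_mul _
      have hpξ : dist p ξ = τξ := by
        have hh : dist (ζ 0) (ζ (dist p x - μ * dist p x)) = |0 - (dist p x - μ * dist p x)| := by
          apply hζiso
          · exact ⟨le_rfl, dist_nonneg⟩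
          · exact ⟨by linarith [hμd.2], by linarith [hμd.1]⟩
        rw [hζ0] at hh
        simp only [hξ, hρ, hτξ]
        rw [hh, abs_of_nonpos (by linarith [hμd.1, hμd.2])]; ring
      have hξx : dist ξ x = μ * dist p x := by
        have hh : dist (ζ (dist p x - μ * dist p x)) (ζ (dist p x)) =
            |(dist p x - μ * dist p x) - dist p x| := by
          apply hζiso
          · exact ⟨by linarith [hμd.2], by linarith [hμd.1]⟩
          · exact ⟨dist_nonneg, le_rfl⟩
        rw [hζd] at hh
        simp only [hξ, hρ]
        rw [hh, abs_of_nonpos (by linarith [hμd.1])]; ring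
      -- τξ ≥ Δ
      have hτξΔ : Δ ≤ τξ := by
        rw [hτξ, hdpx, hμ]
        rw [show d - (L - 2*Δ)/L * d = (2*Δ*d)/L by field_simp; ring]
        rw [le_div_iff₀ hL0]
        nlinarith [hΔ0, hΔd]
      -- π ξ = p
      have hπξ : π ξ = p := by
        rw [hp]
        apply proj_on_seg_eq hcn hb hπ
        rw [← hp, hpξ, hξx, hdpx, hτξ, hdpx]
        ring
      -- infDist ξ = τξ
      have hinfξ : infDist ξ (rayIm b) = τξ := by
        have h1 : dist ξ (π ξ) = infDist ξ (rayIm b) := (hπ ξ).2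
        rw [hπξ, dist_comm ξ p, hpξ] at h1
        linarith
      -- contraction pair (ξ, x')
      have hpair : dist ξ x' ≤ infDist ξ (rayIm b) := by
        rw [hinfξ]
        calc dist ξ x' ≤ μ * Δ := by
              have := hconv
              rw [dist_comm ξ x']
              simpa [hξ] using by linarith [hconv]
          _ ≤ 1 * Δ := mul_le_mul_of_nonneg_right hμmem.2 hΔ0
          _ = Δ := one_mul Δ
          _ ≤ τξ := hτξΔ
      have hnormξ : dist o ξ ≤ 4*M + 1 := by
        have h1 := dist_triangle o p ξ
        have h2 : τξ ≤ 2*Δ := by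
          rw [hτξ, hdpx, hμ]
          rw [show d - (L - 2*Δ)/L * d = (2*Δ*d)/L by field_simp; ring]
          rw [div_le_iff₀ hL0]
          nlinarith [hΔ0, hLd]
        have h3 : s ≤ M := le_max_left s r
        linarith [hop, hpξ, hΔM]
      have hP := hjump ξ x' hnormξ hpair
      rw [hπξ] at hP
      rw [dist_comm p (π x')] at hP
      refine walk x' hx'seg ?_ ?_
      · rw [hx'y]; linarith
      · rw [dist_comm p (π x')]; exact hP
  -- choose z and conclude
  have hfinal : 4 * EE ≤ 32 * c₀ * (1 + κ 1) * κ M := by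
    have h1 : κ (4*(M+1)) ≤ 4 * κ (M+1) := by
      have := kappa_scale hκ (by linarith : (0:ℝ) ≤ M+1) (by norm_num : (1:ℝ) ≤ 4)
      linarith [this]
    have h2 : κ (M+1) ≤ κ M + κ 1 := kappa_subadd hκ hM0 zero_le_one
    have h3 : κ 1 ≤ κ 1 * κ M := by
      nlinarith [hκ.one_le M, hκ1]
    have h4 : κ (4*(M+1)) ≤ 4 * ((1 + κ 1) * κ M) := by nlinarith [h1, h2, h3]
    have h5 : EE ≤ c₀ * (4 * ((1 + κ 1) * κ M)) := mul_le_mul_of_nonneg_left h4 hc₀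
    nlinarith [h5]
  rcases le_total s r with hsr | hsr
  · refine ⟨b r, ⟨⟨r, mem_Ici.mpr hr, rfl⟩, right_mem_seg _ _⟩, ?_⟩
    rw [hor]
    have hMr : M = r := max_eq_right hsr
    rw [hMr] at hfinal
    linarith [hkey, hfinal]
  · refine ⟨p, ⟨(hπ x).1, left_mem_seg _ _⟩, ?_⟩
    rw [hop]
    have hMs : M = s := max_eq_left hsr
    rw [hMs] at hfinal
    linarith [hkey, hfinal]

end DirA

/-- Proposition 3.6. A geodesic ray `b` in a proper CAT(0) space is
`κ`-contracting iff it satisfies κ-slim condition 2. -/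
theorem contracting_iff_slim2
    {X : Type*} [MetricSpace X] [ProperSpace X] (hX : IsCAT0 X)
    (o : X) (κ : ℝ → ℝ) (hκ : IsSublinearFn κ)
    (b : ℝ → X) (hb : IsGeodesicRay b) (hb0 : b 0 = o)
    (π : X → X) (hπ : IsProj b π) :
    KappaContracting κ o b π ↔ SlimCond2 κ o b π :=
  ⟨contracting_to_slim2 hX hκ hb hb0 hπ, slim2_to_contracting hX hκ hb hb0 hπ⟩
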